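/- First integral and energy of the soliton: Q'(x)² = Q(x)² - (2/(m+1))·Q(x)^(m+1) for all x ∈ ℝ, and consequently the energy E[Q] := (1/2)·∫_ℝ Q'(x)² dx - (1/(m+1))·∫_ℝ Q(x)^(m+1) dx equals -((5-m)/(2·(m+3)))·∫_ℝ Q(x)² dx; in particular E[Q] < 0 whenever 1 < m < 5. -/

import Mathlib

open Real MeasureTheory

/-- The explicit soliton profile `Q(x) = ((m+1)/(2 cosh²(((m-1)/2) x)))^(1/(m-1))`. -/
noncomputable def solQ (m : ℝ) (x : ℝ) : ℝ :=
  ((m + 1) / (2 * Real.cosh ((m - 1) / 2 * x) ^ 2)) ^ (1 / (m - 1))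

open Set Filter Topology

lemma even_integrable {f : ℝ → ℝ} (he : ∀ x, f (-x) = f x)
    (hf : IntegrableOn f (Ioi 0)) : Integrable f := by
  have int_Iic : IntegrableOn f (Iic 0) := by
    rw [← Measure.map_neg_eq_self (volume : Measure ℝ)]
    have m : MeasurableEmbedding fun x : ℝ => -x :=
      (Homeomorph.neg ℝ).measurableEmbedding
    rw [m.integrableOn_map_iff]
    simp_rw [Function.comp_def, he, neg_preimage, neg_Iic, neg_zero]
    exact Iff.mpr integrableOn_Ici_iff_integrableOn_Ioi hf
  rw [← integrableOn_univ, ← Iic_union_Ioi (a := (0:ℝ))]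
  exact int_Iic.union hf

lemma integrable_sech {a p : ℝ} (ha : 0 < a) (hp : 0 < p) :
    Integrable (fun x : ℝ => Real.cosh (a * x) ^ (-p)) := by
  apply even_integrable (fun x => by rw [mul_neg, Real.cosh_neg])
  have hcont : Continuous (fun x : ℝ => Real.cosh (a * x) ^ (-p)) := by
    apply Continuous.rpow_const (Real.continuous_cosh.comp (continuous_const.mul continuous_id))
    exact fun x => Or.inl (ne_of_gt (Real.cosh_pos _))
  refine Integrable.mono' (g := fun x => (2:ℝ)^p * Real.exp (-(p*a) * x)) ?_
    hcont.aestronglyMeasurable.restrict ?_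
  · exact ((exp_neg_integrableOn_Ioi 0 (mul_pos hp ha)).const_mul _)
  · filter_upwards [ae_restrict_mem measurableSet_Ioi] with x hx
    have h1 : Real.exp (a*x) / 2 ≤ Real.cosh (a*x) := by
      rw [Real.cosh_eq]
      have := (Real.exp_pos (-(a*x))).le
      linarith
    have h2 : (0:ℝ) < Real.exp (a*x)/2 := by positivity
    rw [Real.norm_eq_abs, abs_of_nonneg (Real.rpow_nonneg (Real.cosh_pos _).le _)]
    calc Real.cosh (a*x) ^ (-p) ≤ (Real.exp (a*x)/2) ^ (-p) :=
          Real.rpow_le_rpow_of_nonpos h2 h1 (neg_nonpos.mpr hp.le)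
      _ = Real.exp (a*x) ^ (-p) / (2:ℝ) ^ (-p) :=
          Real.div_rpow (Real.exp_pos _).le (by norm_num) _
      _ = (2:ℝ)^p * Real.exp (-(p*a) * x) := by
          rw [Real.rpow_def_of_pos (Real.exp_pos _), Real.log_exp,
            Real.rpow_neg (by norm_num : (0:ℝ) ≤ 2), div_inv_eq_mul,
            show a*x*(-p) = -(p*a)*x by ring]
          ring

lemma cosh_mul_tendsto_atTop {a : ℝ} (ha : 0 < a) :
    Tendsto (fun x : ℝ => Real.cosh (a*x)) atTop atTop := by
  apply tendsto_atTop_mono (f := fun x : ℝ => Real.exp (a*x) / 2)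
  · intro x
    rw [Real.cosh_eq]
    have := (Real.exp_pos (-(a*x))).le
    linarith
  · exact (Real.tendsto_exp_atTop.comp (Tendsto.const_mul_atTop ha tendsto_id)).atTop_div_const
      two_pos

lemma cosh_mul_tendsto_atBot {a : ℝ} (ha : 0 < a) :
    Tendsto (fun x : ℝ => Real.cosh (a*x)) atBot atTop := by
  have := (cosh_mul_tendsto_atTop ha).comp tendsto_neg_atBot_atTop
  simpa [Function.comp_def, mul_neg, Real.cosh_neg] using this

lemma sech_tendsto_atTop {a p : ℝ} (ha : 0 < a) (hp : 0 < p) :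
    Tendsto (fun x : ℝ => Real.cosh (a*x) ^ (-p)) atTop (𝓝 0) :=
  (tendsto_rpow_neg_atTop hp).comp (cosh_mul_tendsto_atTop ha)

lemma sech_tendsto_atBot {a p : ℝ} (ha : 0 < a) (hp : 0 < p) :
    Tendsto (fun x : ℝ => Real.cosh (a*x) ^ (-p)) atBot (𝓝 0) :=
  (tendsto_rpow_neg_atTop hp).comp (cosh_mul_tendsto_atBot ha)

lemma sech_reduction {a p : ℝ} (ha : 0 < a) (hp : 0 < p) :
    ∫ x : ℝ, Real.cosh (a*x) ^ (-(p+2)) = (p/(p+1)) * ∫ x : ℝ, Real.cosh (a*x) ^ (-p) := by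
  have hp1 : (0:ℝ) < p + 1 := by linarith
  have h2 := integrable_sech ha (by linarith : (0:ℝ) < p+2)
  have h0 := integrable_sech ha hp
  set F : ℝ → ℝ := fun x => Real.sinh (a*x) * Real.cosh (a*x) ^ (-(p+1)) / (a*(p+1)) with hF
  have hder : ∀ x, HasDerivAt F
      (Real.cosh (a*x)^(-(p+2)) - (p/(p+1)) * Real.cosh (a*x)^(-p)) x := by
    intro x
    have hc := Real.cosh_pos (a*x)
    have hax : HasDerivAt (fun y : ℝ => a*y) a x := by
      simpa using (hasDerivAt_id x).const_mul a
    have hs : HasDerivAt (fun y => Real.sinh (a*y)) (Real.cosh (a*x) * a) x :=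
      (Real.hasDerivAt_sinh _).comp x hax
    have hcd : HasDerivAt (fun y => Real.cosh (a*y)) (Real.sinh (a*x) * a) x :=
      (Real.hasDerivAt_cosh _).comp x hax
    have hcp : HasDerivAt (fun y => Real.cosh (a*y) ^ (-(p+1)))
        (Real.sinh (a*x) * a * (-(p+1)) * Real.cosh (a*x) ^ (-(p+1) - 1)) x :=
      hcd.rpow_const (Or.inl hc.ne')
    have H := (hs.mul hcp).div_const (a*(p+1))
    refine H.congr_deriv (Eq.symm ?_)
    set c := Real.cosh (a*x)
    set s := Real.sinh (a*x)
    have e1 : c ^ (-(p+1) - 1) = c ^ (-(p+2)) := by ring_nf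
    have e2 : c * c ^ (-(p+1)) = c ^ (-p) := by
      nth_rewrite 1 [← Real.rpow_one c]
      rw [← Real.rpow_add hc]
      ring_nf
    have e3 : c^(2:ℕ) * c^(-(p+2)) = c ^ (-p) := by
      rw [← Real.rpow_natCast c 2, ← Real.rpow_add hc]
      norm_num
    have e4 : s^2 = c^2 - 1 := Real.sinh_sq (a*x)
    rw [e1]
    rw [eq_div_iff (by positivity : a*(p+1) ≠ 0)]
    have expand : c * a * c ^ (-(p+1)) + s * (s * a * (-(p+1)) * c ^ (-(p+2)))
        = a * (c * c^(-(p+1))) - (a*(p+1)) * (s^2 * c^(-(p+2))) := by ring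
    have lhs_eq : (c ^ (-(p + 2)) - p / (p + 1) * c ^ (-p)) * (a * (p + 1))
        = a * c^(-p) - (a*(p+1)) * (c^(-p) - c^(-(p+2))) := by field_simp; ring
    rw [lhs_eq, expand, e2, e4, show (c^2-1) * c^(-(p+2)) = c^(2:ℕ)*c^(-(p+2)) - c^(-(p+2)) by ring, e3]
  have hint : Integrable (fun x : ℝ =>
      Real.cosh (a*x)^(-(p+2)) - (p/(p+1)) * Real.cosh (a*x)^(-p)) :=
    h2.sub (h0.const_mul _)
  have hbound : ∀ x, ‖F x‖ ≤ Real.cosh (a*x) ^ (-p) / (a*(p+1)) := by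
    intro x
    have hc := Real.cosh_pos (a*x)
    have hsc : |Real.sinh (a*x)| ≤ Real.cosh (a*x) := by
      have h4 := Real.sinh_sq (a*x)
      rw [abs_le]
      constructor <;> nlinarith
    have key : |Real.sinh (a*x) * Real.cosh (a*x) ^ (-(p+1))| ≤ Real.cosh (a*x) ^ (-p) := by
      rw [abs_mul, abs_of_nonneg (Real.rpow_nonneg hc.le _)]
      calc |Real.sinh (a*x)| * Real.cosh (a*x) ^ (-(p+1))
          ≤ Real.cosh (a*x) * Real.cosh (a*x) ^ (-(p+1)) :=
            mul_le_mul_of_nonneg_right hsc (Real.rpow_nonneg hc.le _)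
        _ = Real.cosh (a*x) ^ (-p) := by
            nth_rewrite 1 [← Real.rpow_one (Real.cosh (a*x))]
            rw [← Real.rpow_add hc]; ring_nf
    rw [hF, Real.norm_eq_abs, abs_div, abs_of_pos (by positivity : (0:ℝ) < a*(p+1))]
    gcongr
  have htop : Tendsto F atTop (𝓝 0) :=
    squeeze_zero_norm hbound (by simpa using (sech_tendsto_atTop ha hp).div_const (a*(p+1)))
  have hbot : Tendsto F atBot (𝓝 0) :=
    squeeze_zero_norm hbound (by simpa using (sech_tendsto_atBot ha hp).div_const (a*(p+1)))
  have hI := integral_of_hasDerivAt_of_tendsto hder hint hbot htop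
  rw [sub_zero, integral_sub h2 (h0.const_mul _), integral_const_mul] at hI
  linarith

lemma sech_integral_pos {a p : ℝ} (ha : 0 < a) (hp : 0 < p) :
    0 < ∫ x : ℝ, Real.cosh (a*x) ^ (-p) := by
  rw [integral_pos_iff_support_of_nonneg
    (fun x => Real.rpow_nonneg (Real.cosh_pos _).le _) (integrable_sech ha hp)]
  have : Function.support (fun x : ℝ => Real.cosh (a*x) ^ (-p)) = Set.univ := by
    apply Set.eq_univ_of_forall
    intro x
    exact ne_of_gt (Real.rpow_pos_of_pos (Real.cosh_pos _) _)
  rw [this]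
  simp


lemma solQ_eq (m : ℝ) (hm : 1 < m) (x : ℝ) :
    solQ m x = ((m+1)/2) ^ (1/(m-1)) *
      Real.cosh ((m-1)/2*x) ^ (-(2/(m-1))) := by
  have hc := Real.cosh_pos ((m-1)/2 * x)
  unfold solQ
  rw [show (m+1)/(2 * Real.cosh ((m-1)/2*x)^2)
      = ((m+1)/2) * (Real.cosh ((m-1)/2*x)^2)⁻¹ from by ring]
  rw [Real.mul_rpow (by linarith : (0:ℝ) ≤ (m+1)/2) (inv_nonneg.mpr (sq_nonneg _))]
  congr 1
  rw [← Real.rpow_natCast (Real.cosh ((m-1)/2*x)) 2, ← Real.rpow_neg hc.le,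
    ← Real.rpow_mul hc.le]
  congr 1
  have h1 : m - 1 ≠ 0 := by linarith
  push_cast
  field_simp

lemma solQ_hasDeriv (m : ℝ) (hm : 1 < m) (x : ℝ) :
    HasDerivAt (solQ m)
      (-(((m+1)/2) ^ (1/(m-1))) * Real.sinh ((m-1)/2*x) *
        Real.cosh ((m-1)/2*x) ^ (-(2/(m-1)) - 1)) x := by
  have h1 : m - 1 ≠ 0 := by linarith
  have hc := Real.cosh_pos ((m-1)/2 * x)
  have hax : HasDerivAt (fun y : ℝ => (m-1)/2 * y) ((m-1)/2) x := by
    simpa using (hasDerivAt_id x).const_mul ((m-1)/2)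
  have hcd : HasDerivAt (fun y => Real.cosh ((m-1)/2*y)) (Real.sinh ((m-1)/2*x) * ((m-1)/2)) x :=
    (Real.hasDerivAt_cosh _).comp x hax
  have hcp : HasDerivAt (fun y => Real.cosh ((m-1)/2*y) ^ (-(2/(m-1))))
      (Real.sinh ((m-1)/2*x) * ((m-1)/2) * (-(2/(m-1))) *
        Real.cosh ((m-1)/2*x) ^ (-(2/(m-1)) - 1)) x :=
    hcd.rpow_const (Or.inl hc.ne')
  have H := hcp.const_mul (((m+1)/2) ^ (1/(m-1)))
  have heq : (fun y => ((m+1)/2) ^ (1/(m-1)) * Real.cosh ((m-1)/2*y) ^ (-(2/(m-1)))) = solQ m :=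
    funext fun y => (solQ_eq m hm y).symm
  rw [heq] at H
  refine H.congr_deriv (Eq.symm ?_)
  have : (m-1)/2 * (-(2/(m-1))) = -1 := by field_simp
  field_simp


theorem stmt18 (m : ℝ) (hm : 1 < m) :
    (∀ x, deriv (solQ m) x ^ 2 = solQ m x ^ 2 - (2 / (m + 1)) * solQ m x ^ (m + 1)) ∧
    ((1/2) * (∫ x : ℝ, deriv (solQ m) x ^ 2)
        - (1 / (m + 1)) * (∫ x : ℝ, solQ m x ^ (m + 1))
      = -((5 - m) / (2 * (m + 3))) * ∫ x : ℝ, solQ m x ^ 2) ∧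
    (m < 5 →
      (1/2) * (∫ x : ℝ, deriv (solQ m) x ^ 2)
        - (1 / (m + 1)) * (∫ x : ℝ, solQ m x ^ (m + 1)) < 0) := by
  have h1 : m - 1 ≠ 0 := by linarith
  have hne1 : m + 1 ≠ 0 := by linarith
  have hne3 : m + 3 ≠ 0 := by linarith
  have ha : (0:ℝ) < (m-1)/2 := by linarith
  have hr : (0:ℝ) < 2/(m-1) := div_pos two_pos (by linarith)
  have hC : (0:ℝ) < ((m+1)/2) ^ (1/(m-1)) := Real.rpow_pos_of_pos (by linarith) _
  have hu : (0:ℝ) ≤ (m+1)/2 := by linarith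
  -- pointwise square of Q
  have hQsq : ∀ x, solQ m x ^ 2 = (((m+1)/2) ^ (1/(m-1)))^2 *
      Real.cosh ((m-1)/2*x) ^ (-(2*(2/(m-1)))) := by
    intro x
    have hc := Real.cosh_pos ((m-1)/2 * x)
    rw [solQ_eq m hm x, mul_pow]
    congr 1
    rw [sq, ← Real.rpow_add hc]
    congr 1
    ring
  -- pointwise square of Q'
  have hDsq : ∀ x, deriv (solQ m) x ^ 2
      = (((m+1)/2) ^ (1/(m-1)))^2 * Real.cosh ((m-1)/2*x) ^ (-(2*(2/(m-1))))
        - (((m+1)/2) ^ (1/(m-1)))^2 * Real.cosh ((m-1)/2*x) ^ (-(2*(2/(m-1))+2)) := by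
    intro x
    have hc := Real.cosh_pos ((m-1)/2 * x)
    rw [(solQ_hasDeriv m hm x).deriv]
    have e1 : (Real.cosh ((m-1)/2*x) ^ (-(2/(m-1)) - 1))^2
        = Real.cosh ((m-1)/2*x) ^ (-(2*(2/(m-1))+2)) := by
      rw [sq, ← Real.rpow_add hc]; congr 1; ring
    have e2 : Real.cosh ((m-1)/2*x)^(2:ℕ) * Real.cosh ((m-1)/2*x) ^ (-(2*(2/(m-1))+2))
        = Real.cosh ((m-1)/2*x) ^ (-(2*(2/(m-1)))) := by
      rw [← Real.rpow_natCast (Real.cosh ((m-1)/2*x)) 2, ← Real.rpow_add hc]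
      congr 1; push_cast; ring
    rw [show (-(((m+1)/2) ^ (1/(m-1))) * Real.sinh ((m-1)/2*x) *
          Real.cosh ((m-1)/2*x) ^ (-(2/(m-1)) - 1))^2
        = Real.sinh ((m-1)/2*x)^2 * (Real.cosh ((m-1)/2*x) ^ (-(2/(m-1)) - 1))^2 *
          (((m+1)/2) ^ (1/(m-1)))^2 from by ring,
      Real.sinh_sq, e1,
      show (Real.cosh ((m-1)/2*x)^2 - 1) * Real.cosh ((m-1)/2*x) ^ (-(2*(2/(m-1))+2)) *
          (((m+1)/2) ^ (1/(m-1)))^2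
        = (Real.cosh ((m-1)/2*x)^(2:ℕ) * Real.cosh ((m-1)/2*x) ^ (-(2*(2/(m-1))+2))) *
          (((m+1)/2) ^ (1/(m-1)))^2
          - Real.cosh ((m-1)/2*x) ^ (-(2*(2/(m-1))+2)) * (((m+1)/2) ^ (1/(m-1)))^2 from by ring,
      e2]
    ring
  -- pointwise (m+1)-power of Q
  have hQm1 : ∀ x, solQ m x ^ (m+1) = ((m+1)/2) * (((m+1)/2) ^ (1/(m-1)))^2 *
      Real.cosh ((m-1)/2*x) ^ (-(2*(2/(m-1))+2)) := by
    intro x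
    have hc := Real.cosh_pos ((m-1)/2 * x)
    rw [solQ_eq m hm x,
      Real.mul_rpow hC.le (Real.rpow_nonneg hc.le _),
      ← Real.rpow_natCast (((m+1)/2) ^ (1/(m-1))) 2,
      ← Real.rpow_mul hu, ← Real.rpow_mul hu, ← Real.rpow_mul hc.le]
    rw [show ((m+1)/2) ^ ((1/(m-1)) * (m+1)) = ((m+1)/2) ^ (1 + 1/(m-1) * (2:ℕ)) from by
        congr 1; push_cast; field_simp; ring,
      Real.rpow_add (by linarith : (0:ℝ) < (m+1)/2), Real.rpow_one]
    rw [show (-(2/(m-1))) * (m+1) = -(2*(2/(m-1))+2) from by field_simp; ring]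
  -- part 1
  have part1 : ∀ x, deriv (solQ m) x ^ 2
      = solQ m x ^ 2 - (2 / (m + 1)) * solQ m x ^ (m + 1) := by
    intro x
    rw [hDsq x, hQsq x, hQm1 x]
    field_simp
  -- integrals
  have hp2 : (0:ℝ) < 2*(2/(m-1)) := by linarith
  have hiA : Integrable (fun x : ℝ => Real.cosh ((m-1)/2*x) ^ (-(2*(2/(m-1))))) :=
    integrable_sech ha hp2
  have hiB : Integrable (fun x : ℝ => Real.cosh ((m-1)/2*x) ^ (-(2*(2/(m-1))+2))) :=
    integrable_sech ha (by linarith)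
  have hred := sech_reduction ha hp2
  have hJpos := sech_integral_pos ha hp2
  have hk : 2*(2/(m-1))/(2*(2/(m-1))+1) = 4/(m+3) := by
    rw [show 2*(2/(m-1))+1 = (m+3)/(m-1) from by field_simp; ring]
    field_simp
    ring
  rw [hk] at hred
  have iQsq : (∫ x : ℝ, solQ m x ^ 2)
      = (((m+1)/2) ^ (1/(m-1)))^2 * ∫ x : ℝ, Real.cosh ((m-1)/2*x) ^ (-(2*(2/(m-1)))) := by
    simp_rw [hQsq]
    rw [integral_const_mul]
  have iQm1 : (∫ x : ℝ, solQ m x ^ (m+1))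
      = ((m+1)/2) * (((m+1)/2) ^ (1/(m-1)))^2 *
        ∫ x : ℝ, Real.cosh ((m-1)/2*x) ^ (-(2*(2/(m-1))+2)) := by
    simp_rw [hQm1]
    rw [integral_const_mul]
  have iDsq : (∫ x : ℝ, deriv (solQ m) x ^ 2)
      = (((m+1)/2) ^ (1/(m-1)))^2 * (∫ x : ℝ, Real.cosh ((m-1)/2*x) ^ (-(2*(2/(m-1)))))
        - (((m+1)/2) ^ (1/(m-1)))^2 *
          ∫ x : ℝ, Real.cosh ((m-1)/2*x) ^ (-(2*(2/(m-1))+2)) := by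
    simp_rw [hDsq]
    rw [integral_sub (hiA.const_mul _) (hiB.const_mul _), integral_const_mul, integral_const_mul]
  have part2 : (1/2) * (∫ x : ℝ, deriv (solQ m) x ^ 2)
        - (1 / (m + 1)) * (∫ x : ℝ, solQ m x ^ (m + 1))
      = -((5 - m) / (2 * (m + 3))) * ∫ x : ℝ, solQ m x ^ 2 := by
    rw [iQsq, iQm1, iDsq, hred]
    field_simp
    ring
  refine ⟨part1, part2, fun hm5 => ?_⟩
  rw [part2, iQsq]
  apply mul_neg_of_neg_of_pos
  · have : (0:ℝ) < (5-m)/(2*(m+3)) := by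
      apply div_pos (by linarith) (by linarith)
    linarith
  · exact mul_pos (pow_pos hC 2) hJpos
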